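/- Let 0 < α ≤ π with α ≠ 2π/3. Then there exists ε₀ > 0 such that for every ε with 0 < ε ≤ ε₀ and every finite (ε/4)-net X of the circle S¹, the chromatic number of the ε-distance graph D_{X,ε}(α) equals 3. -/

import Mathlib

/-- The circle `S¹ = ℝ/2πℤ` with its quotient metric. -/
abbrev Circle2 : Type := AddCircle (2 * Real.pi)

instance : Fact (0 < 2 * Real.pi) := ⟨by positivity⟩

/-- `X` is an `r`-net of the circle. -/
def cIsNet (r : ℝ) (X : Set Circle2) : Prop :=
  ∀ y : Circle2, ∃ x ∈ X, dist x y ≤ r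

/-- The ε-distance graph with parameter α on a set `X ⊆ S¹`: distinct points are
adjacent iff their distance lies in `[α - ε, α + ε]`. -/
def cDistGraph (X : Set Circle2) (α ε : ℝ) : SimpleGraph X where
  Adj x y := x ≠ y ∧ α - ε ≤ dist x.1 y.1 ∧ dist x.1 y.1 ≤ α + ε
  symm := ⟨by
    intro x y h
    exact ⟨h.1.symm, by rw [dist_comm]; exact h.2.1, by rw [dist_comm]; exact h.2.2⟩⟩
  loopless := ⟨fun x h => h.1 rfl⟩

/-- The ε-distance graph with parameter α on the whole circle `S¹`. -/
def cDistGraphAll (α ε : ℝ) : SimpleGraph Circle2 where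
  Adj x y := x ≠ y ∧ α - ε ≤ dist x y ∧ dist x y ≤ α + ε
  symm := ⟨by
    intro x y h
    exact ⟨h.1.symm, by rw [dist_comm]; exact h.2.1, by rw [dist_comm]; exact h.2.2⟩⟩
  loopless := ⟨fun x h => h.1 rfl⟩

open Real

private lemma fin2_ne_cast : ∀ {a b : Fin 2}, a ≠ b →
    ((a : ℕ) : ZMod 2) = ((b : ℕ) : ZMod 2) + 1 := by decide

private lemma coloring_walk_parity {V : Type*} {G : SimpleGraph V} (C : G.Coloring (Fin 2)) :
    ∀ {u v : V} (w : G.Walk u v), ((C u : ℕ) : ZMod 2) = ((C v : ℕ) : ZMod 2) + w.length := by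
  intro u v w
  induction w with
  | nil => simp
  | cons h p ih =>
    rw [SimpleGraph.Walk.length_cons, fin2_ne_cast (C.valid h), ih]
    push_cast
    ring

private lemma not_colorable_two_of_odd_walk {V : Type*} {G : SimpleGraph V} {u : V}
    (w : G.Walk u u) (hodd : Odd w.length) : ¬ G.Colorable 2 := by
  rintro ⟨C⟩
  have h := coloring_walk_parity C w
  have h0 : ((w.length : ℕ) : ZMod 2) = 0 := (left_eq_add.mp h)
  rw [ZMod.natCast_eq_zero_iff] at h0
  rw [← Nat.not_even_iff_odd] at hodd
  exact hodd (even_iff_two_dvd.mpr h0)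

private lemma exists_walk_chain {V : Type*} {G : SimpleGraph V} (v : ℕ → V) :
    ∀ n : ℕ, (∀ i < n, G.Adj (v i) (v (i + 1))) →
      ∃ w : G.Walk (v 0) (v n), w.length = n := by
  intro n
  induction n with
  | zero => exact fun _ => ⟨SimpleGraph.Walk.nil, rfl⟩
  | succ n ih =>
    intro h
    obtain ⟨w, hw⟩ := ih fun i hi => h i (Nat.lt_succ_of_lt hi)
    exact ⟨w.concat (h n (Nat.lt_succ_self n)),
      by rw [SimpleGraph.Walk.length_concat, hw]⟩

private lemma exists_k (α : ℝ) (hα0 : 0 < α) (hαπ : α ≤ π) (hα23 : α ≠ 2 * π / 3) :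
    ∃ k : ℕ, 0 < k ∧ 2 * π / 3 < k * α ∧ (k : ℝ) * α < 4 * π / 3 := by
  have hπ := Real.pi_pos
  rcases lt_trichotomy α (2 * π / 3) with h | h | h
  · have hex : ∃ k : ℕ, 2 * π / 3 < k * α := by
      obtain ⟨k, hk⟩ := Archimedean.arch (2 * π / 3) hα0
      rw [nsmul_eq_mul] at hk
      exact ⟨k + 1, by push_cast; nlinarith⟩
    classical
    set k := Nat.find hex with hkdef
    have hk : 2 * π / 3 < k * α := Nat.find_spec hex
    have hkpos : 0 < k := by
      rcases Nat.eq_zero_or_pos k with h0 | h0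
      · exfalso
        rw [h0] at hk
        norm_num at hk
        nlinarith
      · exact h0
    have hprev : ¬ (2 * π / 3 < ((k - 1 : ℕ) : ℝ) * α) := Nat.find_min hex (by omega)
    push_neg at hprev
    rw [Nat.cast_sub hkpos, Nat.cast_one] at hprev
    exact ⟨k, hkpos, hk, by nlinarith⟩
  · exact absurd h hα23
  · exact ⟨1, one_pos, by push_cast; linarith, by push_cast; nlinarith⟩

private lemma no_int_in_gap {ℓ d : ℝ} (hℓ : 0 < ℓ) (n : ℤ) (h : |d - 3 * ℓ * n| < ℓ)
    (h1 : ℓ ≤ d) (h2 : d ≤ 2 * ℓ) : False := by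
  rw [abs_lt] at h
  rcases le_or_gt n 0 with hn | hn
  · have : (n : ℝ) ≤ 0 := by exact_mod_cast hn
    nlinarith
  · have : (1 : ℝ) ≤ n := by exact_mod_cast hn
    nlinarith

private lemma same_color_dist {k : ℕ} (hk : 0 < k) (x y : ℝ)
    (hcol : ((⌊x / (2 * π / (3 * k))⌋ : ℤ) : ZMod 3) = ((⌊y / (2 * π / (3 * k))⌋ : ℤ) : ZMod 3)) :
    ∃ n : ℤ, |‖((x - y : ℝ) : Circle2)‖ - 3 * (2 * π / (3 * k)) * n| < 2 * π / (3 * k) := by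
  have hπ := Real.pi_pos
  set ℓ : ℝ := 2 * π / (3 * k) with hℓdef
  have hkR : (0:ℝ) < (k : ℝ) := by exact_mod_cast hk
  have hℓ : 0 < ℓ := by rw [hℓdef]; positivity
  have h2π : 2 * π = 3 * k * ℓ := by rw [hℓdef]; field_simp
  have hdvd : (3 : ℤ) ∣ ⌊x / ℓ⌋ - ⌊y / ℓ⌋ := by
    rw [ZMod.intCast_eq_intCast_iff] at hcol
    exact (Int.ModEq.dvd hcol.symm)
  obtain ⟨j, hj⟩ := hdvd
  have hjR : (⌊x / ℓ⌋ : ℝ) - (⌊y / ℓ⌋ : ℝ) = 3 * (j : ℝ) := by exact_mod_cast hj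
  have hx1 : (⌊x / ℓ⌋ : ℝ) * ℓ ≤ x := by
    have := Int.floor_le (x / ℓ)
    calc (⌊x / ℓ⌋ : ℝ) * ℓ ≤ (x / ℓ) * ℓ := by nlinarith
    _ = x := by field_simp
  have hx2 : x < (⌊x / ℓ⌋ : ℝ) * ℓ + ℓ := by
    have := Int.lt_floor_add_one (x / ℓ)
    have h' : x / ℓ * ℓ < ((⌊x / ℓ⌋ : ℝ) + 1) * ℓ := by nlinarith
    rw [div_mul_cancel₀ _ hℓ.ne'] at h'
    linarith [h']
  have hy1 : (⌊y / ℓ⌋ : ℝ) * ℓ ≤ y := by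
    have := Int.floor_le (y / ℓ)
    calc (⌊y / ℓ⌋ : ℝ) * ℓ ≤ (y / ℓ) * ℓ := by nlinarith
    _ = y := by field_simp
  have hy2 : y < (⌊y / ℓ⌋ : ℝ) * ℓ + ℓ := by
    have := Int.lt_floor_add_one (y / ℓ)
    have h' : y / ℓ * ℓ < ((⌊y / ℓ⌋ : ℝ) + 1) * ℓ := by nlinarith
    rw [div_mul_cancel₀ _ hℓ.ne'] at h'
    linarith [h']
  have key : |x - y - 3 * (j : ℝ) * ℓ| < ℓ := by
    rw [abs_lt]
    constructor <;> nlinarith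
  have hd : ‖((x - y : ℝ) : Circle2)‖
      = |x - y - round ((2 * π)⁻¹ * (x - y)) * (2 * π)| := AddCircle.norm_eq _
  set r : ℤ := round ((2 * π)⁻¹ * (x - y)) with hrdef
  have hw : x - y - (r : ℝ) * (2 * π)
      = (x - y - 3 * (j : ℝ) * ℓ) - 3 * ℓ * (((k : ℤ) * r - j : ℤ) : ℝ) := by
    rw [h2π]; push_cast; ring
  rcases abs_cases (x - y - (r : ℝ) * (2 * π)) with ⟨he, _⟩ | ⟨he, _⟩
  · refine ⟨j - (k : ℤ) * r, ?_⟩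
    have : ‖((x - y : ℝ) : Circle2)‖ - 3 * ℓ * ((j - (k : ℤ) * r : ℤ) : ℝ)
        = x - y - 3 * (j : ℝ) * ℓ := by
      rw [hd, he, hw]; push_cast; ring
    rw [this]; exact key
  · refine ⟨(k : ℤ) * r - j, ?_⟩
    have : ‖((x - y : ℝ) : Circle2)‖ - 3 * ℓ * (((k : ℤ) * r - j : ℤ) : ℝ)
        = -(x - y - 3 * (j : ℝ) * ℓ) := by
      rw [hd, he, hw]; push_cast; ring
    rw [this, abs_neg]; exact key

private lemma colorable_three {α ε : ℝ} {k : ℕ} (hk : 0 < k)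
    (hl : 2 * π / (3 * k) ≤ α - ε) (hr : α + ε ≤ 2 * (2 * π / (3 * k)))
    (X : Set Circle2) : (cDistGraph X α ε).Colorable 3 := by
  have hπ := Real.pi_pos
  set ℓ : ℝ := 2 * π / (3 * k) with hℓdef
  have hℓ : 0 < ℓ := by rw [hℓdef]; positivity
  let c : Circle2 → ZMod 3 := fun z =>
    ((⌊((AddCircle.equivIco (2 * π) 0 z : ℝ)) / ℓ⌋ : ℤ) : ZMod 3)
  have hC : ∀ u v : X, (cDistGraph X α ε).Adj u v → c u.1 ≠ c v.1 := by
    intro u v hadj hcol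
    obtain ⟨hne, hd1, hd2⟩ := hadj
    set x : ℝ := (AddCircle.equivIco (2 * π) 0 u.1 : ℝ) with hxdef
    set y : ℝ := (AddCircle.equivIco (2 * π) 0 v.1 : ℝ) with hydef
    have hxz : ((x : ℝ) : Circle2) = u.1 := by
      have h := (AddCircle.equivIco (2 * π) 0).symm_apply_apply u.1
      rwa [AddCircle.equivIco, QuotientAddGroup.equivIcoMod_symm_apply] at h
    have hyz : ((y : ℝ) : Circle2) = v.1 := by
      have h := (AddCircle.equivIco (2 * π) 0).symm_apply_apply v.1
      rwa [AddCircle.equivIco, QuotientAddGroup.equivIcoMod_symm_apply] at h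
    have hdist : dist u.1 v.1 = ‖((x - y : ℝ) : Circle2)‖ := by
      rw [dist_eq_norm, ← hxz, ← hyz]
      norm_cast
    obtain ⟨n, hn⟩ := same_color_dist hk x y hcol
    rw [← hdist] at hn
    exact no_int_in_gap hℓ n hn (le_trans hl hd1) (le_trans hd2 hr)
  let C : (cDistGraph X α ε).Coloring (ZMod 3) :=
    SimpleGraph.Coloring.mk (fun x => c x.1) (fun {u v} h => hC u v h)
  have := C.colorable
  rwa [ZMod.card] at this

set_option maxHeartbeats 1000000 in
/-- for `0 < α ≤ π`, `α ≠ 2π/3`, the ε-distance graph on any finite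
`(ε/4)`-net of `S¹` has chromatic number exactly `3` for all small `ε > 0`. -/
theorem stmt_12 (α : ℝ) (hα0 : 0 < α) (hαπ : α ≤ Real.pi) (hα23 : α ≠ 2 * Real.pi / 3) :
    ∃ ε₀ > (0 : ℝ), ∀ ε : ℝ, 0 < ε → ε ≤ ε₀ →
      ∀ X : Set Circle2, X.Finite → cIsNet (ε / 4) X →
        (cDistGraph X α ε).chromaticNumber = 3 := by
  have hπ := Real.pi_pos
  obtain ⟨k, hk, hk1, hk2⟩ := exists_k α hα0 hαπ hα23
  have hkR : (0:ℝ) < (k : ℝ) := by exact_mod_cast hk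
  set ℓ : ℝ := 2 * π / (3 * k) with hℓdef
  have hℓ : 0 < ℓ := by rw [hℓdef]; positivity
  have hℓα : ℓ < α := by
    rw [hℓdef, div_lt_iff₀ (by positivity)]
    nlinarith
  have hα2ℓ : α < 2 * ℓ := by
    have h4 : 2 * ℓ = 4 * π / (3 * k) := by rw [hℓdef]; ring
    rw [h4, lt_div_iff₀ (by positivity : (0:ℝ) < 3 * (k:ℝ))]
    nlinarith
  refine ⟨min (α - ℓ) (2 * ℓ - α), lt_min (by linarith) (by linarith), ?_⟩
  intro ε hε hεε₀ X hXfin hnet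
  have hεl : ℓ ≤ α - ε := by
    have := le_trans hεε₀ (min_le_left _ _); linarith
  have hεr : α + ε ≤ 2 * ℓ := by
    have := le_trans hεε₀ (min_le_right _ _); linarith
  have hεα : ε < α := by linarith
  -- upper bound
  have hcol3 : (cDistGraph X α ε).Colorable 3 :=
    colorable_three hk hεl (by rw [← hℓdef]; linarith) X
  clear_value ℓ
  -- lower bound : construct an odd closed walk
  obtain ⟨n, hndef⟩ : ∃ n : ℕ, n = 2 * ⌈2 * π / ε⌉₊ + 1 := ⟨_, rfl⟩
  have hnR : (0:ℝ) < (n : ℝ) := by rw [hndef]; positivity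
  have hnε : 4 * π ≤ (n : ℝ) * ε := by
    have h1 : 2 * π / ε ≤ (⌈2 * π / ε⌉₊ : ℝ) := Nat.le_ceil _
    have h2 : (2 * (⌈2 * π / ε⌉₊ : ℝ) + 1 : ℝ) ≤ (n : ℝ) := by rw [hndef]; push_cast; linarith
    rw [div_le_iff₀ hε] at h1
    nlinarith
  obtain ⟨m, hmdef⟩ : ∃ m : ℕ, m = ⌈((n : ℝ) * (α - ε / 2)) / (2 * π)⌉₊ := ⟨_, rfl⟩
  have hargpos : 0 < ((n : ℝ) * (α - ε / 2)) / (2 * π) :=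
    div_pos (mul_pos hnR (by linarith)) (by positivity)
  have hm1 : (n : ℝ) * (α - ε / 2) ≤ 2 * π * m := by
    have := Nat.le_ceil (((n : ℝ) * (α - ε / 2)) / (2 * π))
    rw [div_le_iff₀ (by positivity : (0:ℝ) < 2 * π)] at this
    rw [hmdef]; linarith
  have hm2 : 2 * π * m < (n : ℝ) * α := by
    have hcl := Nat.ceil_lt_add_one (le_of_lt hargpos)
    have h' : (⌈((n : ℝ) * (α - ε / 2)) / (2 * π)⌉₊ : ℝ) * (2 * π)
        < (((n : ℝ) * (α - ε / 2)) / (2 * π) + 1) * (2 * π) :=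
      mul_lt_mul_of_pos_right hcl (by positivity)
    rw [add_mul, div_mul_cancel₀ _ (by positivity : (2 * π : ℝ) ≠ 0)] at h'
    rw [hmdef]
    nlinarith
  obtain ⟨δ, hδdef⟩ : ∃ δ : ℝ, δ = 2 * π * m / n := ⟨_, rfl⟩
  have hδ1 : α - ε / 2 ≤ δ := by
    rw [hδdef, le_div_iff₀ hnR]; nlinarith
  have hδ2 : δ < α := by
    rw [hδdef, div_lt_iff₀ hnR]; nlinarith
  have hδpos : 0 < δ := by linarith
  have hδπ : δ ≤ π := by linarith
  have hnormδ : ‖((δ : ℝ) : Circle2)‖ = δ := by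
    rw [(AddCircle.norm_coe_eq_abs_iff (2 * π) (by positivity)).mpr, abs_of_pos hδpos]
    rw [abs_of_pos hδpos, abs_of_pos (by positivity : (0:ℝ) < 2 * π)]
    linarith
  obtain ⟨q, hq, hq0⟩ : ∃ q : ℕ → Circle2,
      (∀ i : ℕ, dist (q i) (q (i + 1)) = δ) ∧ q n = q 0 := by
    refine ⟨fun i => (((i : ℝ) * δ : ℝ) : Circle2), fun i => ?_, ?_⟩
    · have he : ((i : ℝ) * δ) - (((i + 1 : ℕ) : ℝ) * δ) = -δ := by push_cast; ring
      rw [dist_eq_norm]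
      have h1 : (((i : ℝ) * δ : ℝ) : Circle2) - ((((i + 1 : ℕ) : ℝ) * δ : ℝ) : Circle2)
          = ((-δ : ℝ) : Circle2) := by
        rw [← he]; norm_cast
      rw [h1]
      have h2 : ((-δ : ℝ) : Circle2) = -((δ : ℝ) : Circle2) := by norm_cast
      rw [h2, norm_neg, hnormδ]
    · show ((((n : ℕ) : ℝ) * δ : ℝ) : Circle2) = ((((0 : ℕ) : ℝ) * δ : ℝ) : Circle2)
      have hnδ : ((n : ℕ) : ℝ) * δ = 2 * π * m := by
        rw [hδdef]; field_simp
      have hz : ((((0 : ℕ) : ℝ) * δ : ℝ) : Circle2) = 0 := by norm_num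
      rw [hnδ, hz, QuotientAddGroup.eq_zero_iff, AddSubgroup.mem_zmultiples_iff]
      exact ⟨(m : ℤ), by push_cast [zsmul_eq_mul]; ring⟩
  obtain ⟨v, hP, hvn⟩ : ∃ v : ℕ → X,
      (∀ i : ℕ, dist ((v i : X) : Circle2) (q i) ≤ ε / 4) ∧ v n = v 0 := by
    choose P hPmem hPd using hnet
    exact ⟨fun i => ⟨P (q i), hPmem (q i)⟩, fun i => hPd (q i), by simp only [hq0]⟩
  have hadj : ∀ i : ℕ, (cDistGraph X α ε).Adj (v i) (v (i + 1)) := by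
    intro i
    have h1 := hP i
    have h2 := hP (i + 1)
    have hqq := hq i
    have htri1 := dist_triangle4 ((v i : X) : Circle2) (q i) (q (i + 1)) ((v (i + 1) : X) : Circle2)
    have htri2 := dist_triangle4 (q i) ((v i : X) : Circle2) ((v (i + 1) : X) : Circle2) (q (i + 1))
    have hc1 := dist_comm (q i) ((v i : X) : Circle2)
    have hc2 := dist_comm (q (i + 1)) ((v (i + 1) : X) : Circle2)
    have hup : dist ((v i : X) : Circle2) ((v (i + 1) : X) : Circle2) ≤ α + ε := by
      linarith only [htri1, hqq, h1, h2, hc2, hδ2, hε.le]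
    have hlow : α - ε ≤ dist ((v i : X) : Circle2) ((v (i + 1) : X) : Circle2) := by
      linarith only [htri2, hqq, h1, h2, hc1, hδ1]
    have hdpos : (0:ℝ) < dist ((v i : X) : Circle2) ((v (i + 1) : X) : Circle2) := by
      linarith only [hlow, hεl, hℓ]
    refine ⟨?_, hlow, hup⟩
    intro hEq
    rw [hEq] at hdpos
    rw [dist_self] at hdpos
    exact lt_irrefl _ hdpos
  obtain ⟨w, hw⟩ := exists_walk_chain v n (fun i _ => hadj i)
  have hodd : Odd n := ⟨⌈2 * π / ε⌉₊, by rw [hndef]⟩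
  have hnot2 : ¬ (cDistGraph X α ε).Colorable 2 := by
    apply not_colorable_two_of_odd_walk (w.copy rfl hvn)
    rwa [SimpleGraph.Walk.length_copy, hw]
  have h3 : (cDistGraph X α ε).chromaticNumber ≤ 3 := by
    have := hcol3.chromaticNumber_le
    exact_mod_cast this
  have h2 : ¬ (cDistGraph X α ε).chromaticNumber ≤ 2 := by
    rw [show ((2 : ℕ∞)) = ((2 : ℕ) : ℕ∞) by norm_cast,
      SimpleGraph.chromaticNumber_le_iff_colorable]
    exact hnot2
  have hlt : (2 : ℕ∞) < (cDistGraph X α ε).chromaticNumber := lt_of_not_ge h2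
  have h3' : (3 : ℕ∞) ≤ (cDistGraph X α ε).chromaticNumber := by
    have h := Order.add_one_le_of_lt hlt
    have h23 : (2 : ℕ∞) + 1 = 3 := by norm_num
    rwa [h23] at h
  exact le_antisymm h3 h3'
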